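/- arXiv:1405.1607 — 2 statements merged into one kernel-verified Lean document; each statement's English description precedes it below -/
import Mathlib

section
/- Conversely, for a finite unital meet-semilattice E, every expression of the form u_e · ∏_{f ∈ E, f < e}(1 − u_f) with e ∈ E is a nonzero minimal projection, i.e. it is the indicator function of a single point of X. -/
/-- `X`: the set of (unital) semilattice characters `χ : E → {0,1}`. -/
abbrev SemilatticeChar (E : Type*) [Monoid E] : Type _ :=
  {χ : E → Bool // (∀ a b : E, χ (a * b) = (χ a && χ b)) ∧ χ 1 = true}

/-- The function `u_e : X → ℤ`, `u_e(χ) = χ(e)`. -/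
def uFun {E : Type*} [Monoid E] (e : E) : SemilatticeChar E → ℤ :=
  fun χ => if χ.1 e then 1 else 0

/-- For a finite unital meet-semilattice `E`, every expression in standard form
`u_e · ∏_{f < e}(1 - u_f)` (with `f ≤ e` iff `e * f = f`) is a nonzero minimal
projection, namely the indicator function of the single point `χ_e ∈ X`, where
`χ_e(f) = 1` iff `e ≤ f` (i.e. `f * e = e`). -/
theorem standard_form_is_minimal_projection {E : Type*} [CommMonoid E] [Fintype E]
    [DecidableEq E] (hidem : ∀ e : E, e * e = e) (e : E) :
    ∃ χ0 : SemilatticeChar E,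
      χ0.1 = (fun f : E => decide (f * e = e)) ∧
      (uFun e * ∏ f ∈ Finset.univ.filter (fun f : E => e * f = f ∧ f ≠ e), (1 - uFun f))
        = fun χ => if χ = χ0 then 1 else 0 := by
  have key : ∀ a b : E, (a * b) * e = e → a * e = e := by
    intro a b h
    have h2 : a * ((a * b) * e) = (a * b) * e := by
      rw [mul_assoc a b e, ← mul_assoc a a (b * e), hidem]
    calc a * e = a * ((a * b) * e) := by rw [h]
      _ = (a * b) * e := h2
      _ = e := h
  have hc : ∀ a b : E, decide ((a * b) * e = e) = (decide (a * e = e) && decide (b * e = e)) := by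
    intro a b
    rw [← Bool.decide_and, decide_eq_decide]
    constructor
    · intro h; exact ⟨key a b h, key b a (by rwa [mul_comm b a])⟩
    · rintro ⟨ha, hb⟩
      calc (a * b) * e = a * (b * e) := mul_assoc a b e
        _ = a * e := by rw [hb]
        _ = e := ha
  refine ⟨⟨fun f => decide (f * e = e), fun a b => hc a b, by simp⟩, rfl, ?_⟩
  funext χ
  obtain ⟨χf, hmul, hone⟩ := χ
  simp only [Pi.mul_apply, Finset.prod_apply, Pi.sub_apply, Pi.one_apply, uFun,
    Subtype.mk.injEq]
  by_cases hχ : χf = fun f => decide (f * e = e)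
  · rw [if_pos hχ]
    subst hχ
    beta_reduce
    have h1 : decide (e * e = e) = true := by simp [hidem]
    simp only [h1, eq_self_iff_true, if_true, one_mul]
    apply Finset.prod_eq_one
    intro f hf
    simp only [Finset.mem_filter] at hf
    have : ¬ (f * e = e) := by
      intro hfe
      exact hf.2.2 (by rw [← hf.2.1, mul_comm, hfe])
    simp [this]
  · rw [if_neg hχ]
    by_cases he : χf e = true
    · -- there must be a strictly smaller f with χf f = true
      have : ∃ f, e * f = f ∧ f ≠ e ∧ χf f = true := by
        by_contra hno
        push_neg at hno
        apply hχ
        funext f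
        by_cases hfe : f * e = e
        · have : χf e = (χf f && χf e) := by rw [← hmul, hfe]
          rw [he] at this
          simp only [Bool.and_true] at this
          simp [← this, he, hfe]
        · have hg1 : e * (f * e) = f * e := by
            rw [mul_comm f e, ← mul_assoc, hidem]
          have hg2 : f * e ≠ e := hfe
          have hg3 : χf (f * e) = false := by
            by_cases hffe : χf (f * e) = true
            · exact absurd hffe (hno (f * e) hg1 hg2)
            · simpa using hffe
          rw [hmul, he, Bool.and_true] at hg3
          simp [hg3, hfe]
      obtain ⟨f, hf1, hf2, hf3⟩ := this
      rw [Finset.prod_eq_zero (i := f) (by simp [hf1, hf2]) (by simp [hf3]), mul_zero]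
    · simp only [Bool.not_eq_true] at he
      simp [he]
end

section
/- With notation as above, for every χ ∈ X define P_χ acting on B ⋊ E via the extension of the E-action β_e(b ⋊ f) = α_e(b) ⋊ ef (taking products of the operators β_e and (1 − β_f) according to χ). Then for every x ∈ B ⋊ E there is a unique element x_P ∈ ρ_P(B) such that x · P(1_B ⋊ 1) = (x_P ⋊ 1) · P(1_B ⋊ 1), where ρ_P = ∏_{e: χ(e)=1} α_e; moreover the map σ_P : B ⋊ E → B, σ_P(x) = x_P, is a *-homomorphism. -/
set_option linter.unusedSectionVars false
set_option maxHeartbeats 1000000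


/-- The idempotent set `E` of a unital inverse semigroup `S`. -/
abbrev Idem (S : Type*) [Monoid S] : Type _ := {e : S // e * e = e}

/-- The unit `1 ∈ E`. -/
def oneIdem (S : Type*) [Monoid S] : Idem S := ⟨1, one_mul 1⟩

/-- The convolution product of the algebraic crossed product `B ⋊ E`, whose elements
are encoded as functions `x : E → B`: `(x * y)(g) = ∑_{e f = g} x(e) α_e(y(f))`. -/
noncomputable def crossMul {S B : Type*} [Monoid S] [DecidableEq S] [Fintype (Idem S)]
    [CStarAlgebra B] (α : S → B →⋆ₙₐ[ℂ] B) (x y : Idem S → B) : Idem S → B :=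
  fun g => ∑ p : Idem S × Idem S,
    if p.1.1 * p.2.1 = g.1 then x p.1 * α p.1.1 (y p.2) else 0

/-- The elementary element `b ⋊ e` of `B ⋊ E`. -/
def elem {S B : Type*} [Monoid S] [DecidableEq S] [CStarAlgebra B]
    (b : B) (e : Idem S) : Idem S → B :=
  fun g => if g = e then b else 0

/-- The involution of `B ⋊ E`: `(b ⋊ e)* = α_e(b*) ⋊ e`. -/
noncomputable def crossStar {S B : Type*} [Monoid S] [CStarAlgebra B]
    (α : S → B →⋆ₙₐ[ℂ] B) (x : Idem S → B) : Idem S → B :=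
  fun f => α f.1 (star (x f))

/-- The extension `β_e` of the `E`-action to `B ⋊ E`: `β_e(b ⋊ f) = α_e(b) ⋊ ef`. -/
noncomputable def betaOp {S B : Type*} [Monoid S] [DecidableEq S] [Fintype (Idem S)]
    [CStarAlgebra B] (α : S → B →⋆ₙₐ[ℂ] B) (e : Idem S) :
    (Idem S → B) → (Idem S → B) :=
  fun x g => ∑ f : Idem S, if e.1 * f.1 = g.1 then α e.1 (x f) else 0

/-- The minimal projection `P = P_χ` of a character `χ` acting on `B ⋊ E`, the product
of the operators `β_e` (for `χ(e) = 1`) and `1 - β_f` (for `χ(f) = 0`). -/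
noncomputable def Pop {S B : Type*} [Monoid S] [DecidableEq S] [Fintype (Idem S)]
    [CStarAlgebra B] (α : S → B →⋆ₙₐ[ℂ] B) (χ : S → Bool) :
    (Idem S → B) → (Idem S → B) :=
  ((Finset.univ : Finset (Idem S)).toList.map
    (fun e => if χ e.1 then betaOp α e else fun x => x - betaOp α e x)).foldr (· ∘ ·) id

/-- The range projection `ρ_P = ∏_{χ(e)=1} α_e : B → B`. -/
noncomputable def rhoP {S B : Type*} [Monoid S] [Fintype (Idem S)]
    [CStarAlgebra B] (α : S → B →⋆ₙₐ[ℂ] B) (χ : S → Bool) : B → B :=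
  ((Finset.univ : Finset (Idem S)).toList.filter (fun e => χ e.1)).foldr
    (fun e g => ⇑(α e.1) ∘ g) id


section SemigroupAux
variable {S : Type*} [Monoid S] (inv : S → S)
    (h1 : ∀ s, s * inv s * s = s) (h2 : ∀ s, inv s * s * inv s = inv s)
    (huniq : ∀ s t, s * t * s = s → t * s * t = t → t = inv s)
include h1 h2 huniq

lemma idem_mul_idem {e f : S} (he : e * e = e) (hf : f * f = f) :
    (e * f) * (e * f) = e * f := by
  have he' : ∀ z : S, e * (e * z) = e * z := fun z => by rw [← mul_assoc, he]
  have hf' : ∀ z : S, f * (f * z) = f * z := fun z => by rw [← mul_assoc, hf]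
  set x := inv (e * f) with hx
  have hx1 : (e * f) * x * (e * f) = e * f := h1 _
  have hx2 : x * (e * f) * x = x := h2 _
  have key : f * x * e = x := by
    refine huniq (e * f) (f * x * e) ?_ ?_
    · simp only [mul_assoc] at hx1 ⊢
      rw [hf', he']
      exact hx1
    · have h5 : x * (e * (f * x)) = x := by simpa only [mul_assoc] using hx2
      simp only [mul_assoc]
      rw [he', hf']
      calc f * (x * (e * (f * (x * e)))) = f * ((x * (e * (f * x))) * e) := by
            simp only [mul_assoc]
        _ = f * (x * e) := by rw [h5]
  have xidem : x * x = x := by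
    conv_lhs => rw [← key]
    calc (f * x * e) * (f * x * e) = f * (x * (e * f) * x) * e := by
          simp only [mul_assoc]
      _ = f * x * e := by rw [hx2]
      _ = x := key
  have h3 : e * f = inv x := huniq x (e * f) hx2 hx1
  have h4 : x = inv x := huniq x x (by rw [xidem, xidem]) (by rw [xidem, xidem])
  rw [h3, ← h4, xidem]

lemma idem_mul_comm {e f : S} (he : e * e = e) (hf : f * f = f) :
    e * f = f * e := by
  have he' : ∀ z : S, e * (e * z) = e * z := fun z => by rw [← mul_assoc, he]
  have hf' : ∀ z : S, f * (f * z) = f * z := fun z => by rw [← mul_assoc, hf]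
  have hef := idem_mul_idem inv h1 h2 huniq he hf
  have hfe := idem_mul_idem inv h1 h2 huniq hf he
  have k1 : f * e = inv (e * f) := by
    refine huniq (e * f) (f * e) ?_ ?_
    · simp only [mul_assoc]
      rw [hf', he']
      simpa only [mul_assoc] using hef
    · simp only [mul_assoc]
      rw [he', hf']
      simpa only [mul_assoc] using hfe
  have k2 : e * f = inv (e * f) := huniq (e * f) (e * f) (by rw [hef, hef]) (by rw [hef, hef])
  rw [k1, ← k2]

lemma idem_inv {e : S} (he : e * e = e) : inv e = e :=
  (huniq e e (by rw [he, he]) (by rw [he, he])).symm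

lemma prod_idem : ∀ L : List S, (∀ a ∈ L, a * a = a) → L.prod * L.prod = L.prod := by
  intro L
  induction L with
  | nil => simp
  | cons h t ih =>
    intro hmem
    have hh : h * h = h := hmem h (by simp)
    have ht : ∀ a ∈ t, a * a = a := fun a ha => hmem a (by simp [ha])
    have hpt := ih ht
    have hc := idem_mul_comm inv h1 h2 huniq (ih ht) hh
    simp only [List.prod_cons]
    calc h * t.prod * (h * t.prod) = h * (t.prod * h) * t.prod := by simp only [mul_assoc]
      _ = h * (h * t.prod) * t.prod := by rw [← hc]
      _ = (h * h) * (t.prod * t.prod) := by simp only [mul_assoc]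
      _ = h * t.prod := by rw [hh, hpt]

lemma prod_absorb : ∀ L : List S, (∀ a ∈ L, a * a = a) → ∀ a ∈ L, L.prod * a = L.prod := by
  intro L
  induction L with
  | nil => simp
  | cons h t ih =>
    intro hmem a ha
    have ht : ∀ b ∈ t, b * b = b := fun b hb => hmem b (by simp [hb])
    have hpt := prod_idem inv h1 h2 huniq t ht
    simp only [List.prod_cons]
    rcases List.mem_cons.mp ha with heq | ha
    · have hh : a * a = a := hmem a ha
      have hc : t.prod * a = a * t.prod := idem_mul_comm inv h1 h2 huniq hpt hh
      subst heq
      calc a * t.prod * a = a * (t.prod * a) := by rw [mul_assoc]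
        _ = a * (a * t.prod) := by rw [hc]
        _ = (a * a) * t.prod := by rw [mul_assoc]
        _ = a * t.prod := by rw [hh]
    · rw [mul_assoc, ih ht a ha]
end SemigroupAux

section CrossAux
variable {S B : Type*} [Monoid S] [DecidableEq S] [Fintype (Idem S)]
  [CStarAlgebra B] (α : S → B →⋆ₙₐ[ℂ] B)

lemma sum_val_eq {s : S} (hs : s * s = s) (F : Idem S → B) :
    (∑ k : Idem S, if s = k.1 then F k else 0) = F ⟨s, hs⟩ := by
  have h : ∀ k : Idem S, (s = k.1) = ((⟨s, hs⟩ : Idem S) = k) := by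
    intro k; simp [Subtype.ext_iff]
  simp_rw [h]
  rw [Finset.sum_ite_eq]
  simp

lemma beta_comp (hα : ∀ s t : S, ∀ x : B, α (s * t) x = α s (α t x))
    (hidem : ∀ a b : S, a * a = a → b * b = b → (a * b) * (a * b) = a * b)
    (e f : Idem S) (hef : (e.1 * f.1) * (e.1 * f.1) = e.1 * f.1) (y : Idem S → B) :
    betaOp α e (betaOp α f y) = betaOp α ⟨e.1 * f.1, hef⟩ y := by
  funext g
  simp only [betaOp]
  calc (∑ k : Idem S, if e.1 * k.1 = g.1 then
          α e.1 (∑ h : Idem S, if f.1 * h.1 = k.1 then α f.1 (y h) else 0) else 0)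
      = ∑ k : Idem S, ∑ h : Idem S,
          if f.1 * h.1 = k.1 then (if e.1 * k.1 = g.1 then α e.1 (α f.1 (y h)) else 0)
          else 0 := by
        refine Finset.sum_congr rfl fun k _ => ?_
        by_cases hc : e.1 * k.1 = g.1
        · rw [if_pos hc, map_sum]
          refine Finset.sum_congr rfl fun h _ => ?_
          rw [apply_ite (⇑(α e.1)), map_zero, if_pos hc]
        · rw [if_neg hc]
          simp [hc]
    _ = ∑ h : Idem S, ∑ k : Idem S,
          if f.1 * h.1 = k.1 then (if e.1 * k.1 = g.1 then α e.1 (α f.1 (y h)) else 0)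
          else 0 := Finset.sum_comm
    _ = ∑ h : Idem S, if e.1 * f.1 * h.1 = g.1 then α (e.1 * f.1) (y h) else 0 := by
        refine Finset.sum_congr rfl fun h _ => ?_
        have hfh : (f.1 * h.1) * (f.1 * h.1) = f.1 * h.1 := hidem _ _ f.2 h.2
        rw [sum_val_eq hfh (fun k => if e.1 * k.1 = g.1 then α e.1 (α f.1 (y h)) else 0)]
        rw [mul_assoc, hα]


lemma beta_one (hα1 : ∀ x : B, α 1 x = x) (y : Idem S → B) :
    betaOp α (oneIdem S) y = y := by
  funext g
  simp only [betaOp, oneIdem, one_mul, hα1]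
  have h : ∀ f : Idem S, (f.1 = g.1) = (g = f) := by
    intro f; simp [Subtype.ext_iff, eq_comm]
  simp_rw [h]
  rw [Finset.sum_ite_eq]
  simp

lemma beta_sub (e : Idem S) (x y : Idem S → B) :
    betaOp α e (x - y) = betaOp α e x - betaOp α e y := by
  funext g
  simp only [betaOp, Pi.sub_apply, map_sub]
  rw [← Finset.sum_sub_distrib]
  refine Finset.sum_congr rfl fun f _ => ?_
  split <;> simp

lemma beta_zero (e : Idem S) : betaOp α e (0 : Idem S → B) = 0 := by
  funext g; simp [betaOp]

lemma elem_one_mul (hα1 : ∀ x : B, α 1 x = x) (b : B) (y : Idem S → B) :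
    crossMul α (elem b (oneIdem S)) y = fun g => b * y g := by
  funext g
  simp only [crossMul, elem]
  rw [Fintype.sum_prod_type]
  rw [Finset.sum_eq_single (oneIdem S)]
  · have h1' : ((oneIdem S).1 : S) = 1 := rfl
    simp only [h1', one_mul, hα1, if_pos rfl]
    have h : ∀ f : Idem S, (f.1 = g.1) = (g = f) := by
      intro f; simp [Subtype.ext_iff, eq_comm]
    simp_rw [h]
    rw [Finset.sum_ite_eq]
    simp
  · intro k _ hk
    simp [if_neg hk]
  · simp

end CrossAux

section FoldAux
variable {S B : Type*} [Monoid S] [DecidableEq S] [Fintype (Idem S)]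
  [CStarAlgebra B] (α : S → B →⋆ₙₐ[ℂ] B) (χ : S → Bool)

/-- The single factor of `Pop`. -/
noncomputable def Fop (e : Idem S) : (Idem S → B) → (Idem S → B) :=
  if χ e.1 then betaOp α e else fun x => x - betaOp α e x

/-- The partial products of `Pop`. -/
noncomputable def foldF : List (Idem S) → (Idem S → B) → (Idem S → B) :=
  fun l => (l.map (Fop α χ)).foldr (· ∘ ·) id

lemma Pop_eq : Pop α χ = foldF α χ (Finset.univ : Finset (Idem S)).toList := rfl

lemma foldF_nil (y : Idem S → B) : foldF α χ [] y = y := rfl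

lemma foldF_cons (e : Idem S) (t : List (Idem S)) (y : Idem S → B) :
    foldF α χ (e :: t) y = Fop α χ e (foldF α χ t y) := rfl

lemma rhoP_eq_foldr (hα : ∀ s t : S, ∀ x : B, α (s * t) x = α s (α t x))
    (hα1 : ∀ x : B, α 1 x = x) :
    ∀ l : List (Idem S),
      l.foldr (fun e g => ⇑(α e.1) ∘ g) id = ⇑(α (l.map Subtype.val).prod) := by
  intro l
  induction l with
  | nil => funext z; simp [hα1]
  | cons e t ih =>
    funext z
    simp only [List.foldr_cons, List.map_cons, List.prod_cons, ih, Function.comp_apply,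
      hα]

end FoldAux


section MoreAux
variable {S B : Type*} [Monoid S] [DecidableEq S] [Fintype (Idem S)]
  [CStarAlgebra B] (α : S → B →⋆ₙₐ[ℂ] B) (χ : S → Bool)
  (hα : ∀ s t : S, ∀ x : B, α (s * t) x = α s (α t x))
  (hα1 : ∀ x : B, α 1 x = x)
  (hidem : ∀ a b : S, a * a = a → b * b = b → (a * b) * (a * b) = a * b)
  (hcomm : ∀ a b : S, a * a = a → b * b = b → a * b = b * a)

lemma Fop_zero (e : Idem S) : Fop α χ e (0 : Idem S → B) = 0 := by
  unfold Fop
  split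
  · exact beta_zero α e
  · show (0 : Idem S → B) - betaOp α e 0 = 0
    rw [beta_zero, sub_zero]

include hα hidem hcomm in
lemma beta_Fop_comm (e f : Idem S) (y : Idem S → B) :
    betaOp α e (Fop α χ f y) = Fop α χ f (betaOp α e y) := by
  have hef : (e.1 * f.1) * (e.1 * f.1) = e.1 * f.1 := hidem _ _ e.2 f.2
  have hfe : (f.1 * e.1) * (f.1 * e.1) = f.1 * e.1 := hidem _ _ f.2 e.2
  have hswap : (⟨e.1 * f.1, hef⟩ : Idem S) = ⟨f.1 * e.1, hfe⟩ :=
    Subtype.ext (hcomm _ _ e.2 f.2)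
  unfold Fop
  split
  · rw [beta_comp α hα hidem e f hef y, beta_comp α hα hidem f e hfe y, hswap]
  · show betaOp α e (y - betaOp α f y) = betaOp α e y - betaOp α f (betaOp α e y)
    rw [beta_sub, beta_comp α hα hidem e f hef y, beta_comp α hα hidem f e hfe y, hswap]

include hα hidem hcomm in
lemma beta_foldF (e : Idem S) :
    ∀ (l : List (Idem S)) (y : Idem S → B), e ∈ l →
      betaOp α e (foldF α χ l y) = if χ e.1 then foldF α χ l y else 0 := by
  intro l
  induction l with
  | nil => intro y hy; simp at hy
  | cons f t ih =>
    intro y hy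
    rw [foldF_cons]
    rcases List.mem_cons.mp hy with heq | hmem
    · subst heq
      set z := foldF α χ t y with hz
      have hee : (e.1 * e.1) * (e.1 * e.1) = e.1 * e.1 := hidem _ _ e.2 e.2
      have hb : betaOp α e (betaOp α e z) = betaOp α e z := by
        have hee' : (⟨e.1 * e.1, hee⟩ : Idem S) = e := Subtype.ext e.2
        rw [beta_comp α hα hidem e e hee z, hee']
      unfold Fop
      by_cases hc : χ e.1
      · simp only [hc, if_true]
        exact hb
      · simp only [hc, Bool.false_eq_true, if_false]
        rw [beta_sub, hb, sub_self]
    · rw [beta_Fop_comm α χ hα hidem hcomm e f, ih y hmem]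
      by_cases hc : χ e.1
      · simp only [hc, if_true]
      · simp only [hc, Bool.false_eq_true, if_false, Fop_zero]

lemma sum_filter_val_eq {v : S} (hv : v * v = v) (c : B) :
    (∑ g ∈ Finset.univ.filter (fun g : Idem S => χ g.1), if v = g.1 then c else 0)
      = if χ v then c else 0 := by
  have h : ∀ g : Idem S, (v = g.1) = ((⟨v, hv⟩ : Idem S) = g) := by
    intro g; simp [Subtype.ext_iff]
  simp_rw [h]
  rw [Finset.sum_ite_eq]
  simp

lemma crossMul_beta (x y : Idem S → B) (g : Idem S) :
    crossMul α x y g = ∑ e : Idem S, x e * betaOp α e y g := by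
  simp only [crossMul, betaOp]
  rw [Fintype.sum_prod_type]
  refine Finset.sum_congr rfl fun e _ => ?_
  rw [Finset.mul_sum]
  refine Finset.sum_congr rfl fun f _ => ?_
  rw [mul_ite, mul_zero]


include hα hidem in
lemma Psi_beta (m1 : S) (e : Idem S) (y : Idem S → B) :
    (∑ g ∈ Finset.univ.filter (fun g : Idem S => χ g.1), α m1 (betaOp α e y g))
      = ∑ f : Idem S, if χ (e.1 * f.1) then α m1 (α e.1 (y f)) else 0 := by
  calc (∑ g ∈ Finset.univ.filter (fun g : Idem S => χ g.1), α m1 (betaOp α e y g))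
      = ∑ g ∈ Finset.univ.filter (fun g : Idem S => χ g.1), ∑ f : Idem S,
          if e.1 * f.1 = g.1 then α m1 (α e.1 (y f)) else 0 := by
        refine Finset.sum_congr rfl fun g _ => ?_
        rw [betaOp, map_sum]
        refine Finset.sum_congr rfl fun f _ => ?_
        rw [apply_ite (⇑(α m1)), map_zero]
    _ = ∑ f : Idem S, ∑ g ∈ Finset.univ.filter (fun g : Idem S => χ g.1),
          if e.1 * f.1 = g.1 then α m1 (α e.1 (y f)) else 0 := Finset.sum_comm
    _ = _ := by
        refine Finset.sum_congr rfl fun f _ => ?_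
        exact sum_filter_val_eq χ (hidem _ _ e.2 f.2) _

include hα hidem in
lemma Psi_Fop (m1 : S) (hχmul : ∀ e f : S, e * e = e → f * f = f → χ (e * f) = (χ e && χ f))
    (hm1e : ∀ e : Idem S, χ e.1 = true → m1 * e.1 = m1)
    (e : Idem S) (y : Idem S → B) :
    (∑ g ∈ Finset.univ.filter (fun g : Idem S => χ g.1), α m1 (Fop α χ e y g))
      = ∑ g ∈ Finset.univ.filter (fun g : Idem S => χ g.1), α m1 (y g) := by
  unfold Fop
  by_cases hc : χ e.1
  · simp only [hc, if_true]
    rw [Psi_beta α χ hα hidem m1 e y]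
    calc (∑ f : Idem S, if χ (e.1 * f.1) then α m1 (α e.1 (y f)) else 0)
        = ∑ f : Idem S, if χ f.1 then α m1 (y f) else 0 := by
          refine Finset.sum_congr rfl fun f _ => ?_
          rw [hχmul e.1 f.1 e.2 f.2, hc, Bool.true_and, ← hα, hm1e e hc]
      _ = _ := (Finset.sum_filter _ _).symm
  · simp only [hc, Bool.false_eq_true, if_false]
    have hz : (∑ g ∈ Finset.univ.filter (fun g : Idem S => χ g.1),
        α m1 (betaOp α e y g)) = 0 := by
      rw [Psi_beta α χ hα hidem m1 e y]
      refine Finset.sum_eq_zero fun f _ => ?_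
      rw [hχmul e.1 f.1 e.2 f.2]
      simp [hc]
    calc (∑ g ∈ Finset.univ.filter (fun g : Idem S => χ g.1),
            α m1 ((y - betaOp α e y) g))
        = (∑ g ∈ Finset.univ.filter (fun g : Idem S => χ g.1), α m1 (y g))
          - ∑ g ∈ Finset.univ.filter (fun g : Idem S => χ g.1),
              α m1 (betaOp α e y g) := by
          rw [← Finset.sum_sub_distrib]
          refine Finset.sum_congr rfl fun g _ => ?_
          rw [Pi.sub_apply, map_sub]
      _ = _ := by rw [hz, sub_zero]

include hα hidem in
lemma Psi_foldF (m1 : S) (hχmul : ∀ e f : S, e * e = e → f * f = f → χ (e * f) = (χ e && χ f))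
    (hm1e : ∀ e : Idem S, χ e.1 = true → m1 * e.1 = m1) :
    ∀ (l : List (Idem S)) (y : Idem S → B),
    (∑ g ∈ Finset.univ.filter (fun g : Idem S => χ g.1), α m1 (foldF α χ l y g))
      = ∑ g ∈ Finset.univ.filter (fun g : Idem S => χ g.1), α m1 (y g) := by
  intro l
  induction l with
  | nil => intro y; rfl
  | cons e t ih =>
    intro y
    have h1 : foldF α χ (e :: t) y = Fop α χ e (foldF α χ t y) := rfl
    rw [h1, Psi_Fop α χ hα hidem m1 hχmul hm1e e (foldF α χ t y), ih y]

end MoreAux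

/-- Let `S` be a unital inverse semigroup with finite idempotent set `E` acting on a
unital C*-algebra `B`, and let `χ` be a unital character on `E` with minimal
projection `P` acting on `B ⋊ E`.  For every `x ∈ B ⋊ E` there is a unique
`x_P ∈ ρ_P(B)` with `x · P(1_B ⋊ 1) = (x_P ⋊ 1) · P(1_B ⋊ 1)`, and the resulting map
`σ_P : B ⋊ E → B`, `σ_P(x) = x_P`, is a *-homomorphism. -/
theorem exists_unique_coefficient_and_star_hom
    {S : Type*} [Monoid S] [DecidableEq S] [Fintype (Idem S)] (inv : S → S)
    (h1 : ∀ s, s * inv s * s = s) (h2 : ∀ s, inv s * s * inv s = inv s)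
    (huniq : ∀ s t, s * t * s = s → t * s * t = t → t = inv s)
    {B : Type*} [CStarAlgebra B]
    (α : S → B →⋆ₙₐ[ℂ] B)
    (hα : ∀ s t : S, ∀ x : B, α (s * t) x = α s (α t x))
    (hα1 : ∀ x : B, α 1 x = x)
    (hcentral : ∀ s : S, ∀ x y : B, α (s * inv s) x * y = x * α (s * inv s) y)
    (χ : S → Bool)
    (hχmul : ∀ e f : S, e * e = e → f * f = f → χ (e * f) = (χ e && χ f))
    (hχone : χ 1 = true) :
    ∃ σ : (Idem S → B) → B,
      -- existence and uniqueness of x_P = σ(x) for x ∈ B ⋊ E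
      (∀ x : Idem S → B, (∀ f : Idem S, x f ∈ Set.range (α f.1)) →
        σ x ∈ Set.range (rhoP α χ) ∧
        crossMul α x (Pop α χ (elem (1 : B) (oneIdem S)))
          = crossMul α (elem (σ x) (oneIdem S)) (Pop α χ (elem (1 : B) (oneIdem S))) ∧
        (∀ b ∈ Set.range (rhoP α χ),
          crossMul α x (Pop α χ (elem (1 : B) (oneIdem S)))
            = crossMul α (elem b (oneIdem S)) (Pop α χ (elem (1 : B) (oneIdem S))) →
          b = σ x)) ∧
      -- σ_P is a *-homomorphism on B ⋊ E
      (∀ x y : Idem S → B, (∀ f : Idem S, x f ∈ Set.range (α f.1)) →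
        (∀ f : Idem S, y f ∈ Set.range (α f.1)) →
        σ (x + y) = σ x + σ y ∧ σ (crossMul α x y) = σ x * σ y) ∧
      (∀ x : Idem S → B, (∀ f : Idem S, x f ∈ Set.range (α f.1)) →
        ∀ c : ℂ, σ (c • x) = c • σ x) ∧
      (∀ x : Idem S → B, (∀ f : Idem S, x f ∈ Set.range (α f.1)) →
        σ (crossStar α x) = star (σ x)) := by

  classical
  -- abbreviations
  have hidem : ∀ a b : S, a * a = a → b * b = b → (a * b) * (a * b) = a * b :=
    fun a b ha hb => idem_mul_idem inv h1 h2 huniq ha hb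
  have hcomm : ∀ a b : S, a * a = a → b * b = b → a * b = b * a :=
    fun a b ha hb => idem_mul_comm inv h1 h2 huniq ha hb
  set L : List (Idem S) :=
    (Finset.univ : Finset (Idem S)).toList.filter (fun e => χ e.1) with hL
  set m1 : S := (L.map Subtype.val).prod with hm1
  have hLidem : ∀ a ∈ L.map Subtype.val, a * a = a := by
    intro a ha
    rcases List.mem_map.mp ha with ⟨e, _, rfl⟩
    exact e.2
  have hm1idem : m1 * m1 = m1 := prod_idem inv h1 h2 huniq _ hLidem
  have hρ : rhoP α χ = ⇑(α m1) := rhoP_eq_foldr α hα hα1 L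
  have hm1e : ∀ e : Idem S, χ e.1 = true → m1 * e.1 = m1 := by
    intro e he
    refine prod_absorb inv h1 h2 huniq _ hLidem e.1 ?_
    exact List.mem_map.mpr ⟨e, List.mem_filter.mpr
      ⟨Finset.mem_toList.mpr (Finset.mem_univ e), he⟩, rfl⟩
  have hinvm1 : m1 * inv m1 = m1 := by
    rw [idem_inv inv h1 h2 huniq hm1idem, hm1idem]
  have hcent : ∀ x y : B, α m1 x * y = x * α m1 y := by
    intro x y
    have h := hcentral m1 x y
    rwa [hinvm1] at h
  have hfixr : ∀ z : B, α m1 (α m1 z) = α m1 z := fun z => by rw [← hα, hm1idem]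
  have hαm1e : ∀ (e : Idem S), χ e.1 = true → ∀ z : B, α m1 (α e.1 z) = α m1 z :=
    fun e he z => by rw [← hα, hm1e e he]
  set P1 : Idem S → B := Pop α χ (elem (1 : B) (oneIdem S)) with hP1def
  have hP1 : P1 = foldF α χ (Finset.univ : Finset (Idem S)).toList
      (elem (1 : B) (oneIdem S)) := rfl
  have hbetaP1 : ∀ e : Idem S, betaOp α e P1 = if χ e.1 then P1 else 0 := by
    intro e
    rw [hP1]
    exact beta_foldF α χ hα hidem hcomm e _ _
      (Finset.mem_toList.mpr (Finset.mem_univ e))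
  -- the projection fixes P1
  have absorbP : ∀ l : List (Idem S), (∀ e ∈ l, χ e.1 = true) →
      ∀ hp : ((l.map Subtype.val).prod) * ((l.map Subtype.val).prod)
        = (l.map Subtype.val).prod,
      betaOp α ⟨(l.map Subtype.val).prod, hp⟩ P1 = P1 := by
    intro l
    induction l with
    | nil =>
      intro _ hp
      have h : (⟨(List.map Subtype.val []).prod, hp⟩ : Idem S) = oneIdem S :=
        Subtype.ext (by simp [oneIdem])
      rw [h, beta_one α hα1]
    | cons e t ih =>
      intro hall hp
      have hte : ∀ b ∈ t.map Subtype.val, b * b = b := by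
        intro b hb
        rcases List.mem_map.mp hb with ⟨f, _, rfl⟩
        exact f.2
      have hpt : ((t.map Subtype.val).prod) * ((t.map Subtype.val).prod)
          = (t.map Subtype.val).prod := prod_idem inv h1 h2 huniq _ hte
      have hq : (e.1 * (t.map Subtype.val).prod) * (e.1 * (t.map Subtype.val).prod)
          = e.1 * (t.map Subtype.val).prod := hidem _ _ e.2 hpt
      have step : (⟨(List.map Subtype.val (e :: t)).prod, hp⟩ : Idem S)
          = ⟨e.1 * (t.map Subtype.val).prod, hq⟩ := Subtype.ext (by simp)
      rw [step, ← beta_comp α hα hidem e ⟨(t.map Subtype.val).prod, hpt⟩ hq P1,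
        ih (fun f hf => hall f (List.mem_cons_of_mem e hf)) hpt, hbetaP1 e,
        if_pos (hall e List.mem_cons_self)]
  have hMP1 : betaOp α ⟨m1, hm1idem⟩ P1 = P1 :=
    absorbP L (fun e he => (List.mem_filter.mp he).2) hm1idem
  have hP1fix : ∀ g : Idem S, α m1 (P1 g) = P1 g := by
    intro g
    have h := congrFun hMP1 g
    conv_lhs => rw [← h]
    conv_rhs => rw [← h]
    simp only [betaOp, map_sum]
    refine Finset.sum_congr rfl fun f _ => ?_
    rw [apply_ite (⇑(α m1)), map_zero]
    split
    · exact hfixr _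
    · rfl
  -- key computations
  have hK1 : ∀ x : Idem S → B, crossMul α x P1 = fun g =>
      (∑ e ∈ Finset.univ.filter (fun e : Idem S => χ e.1), x e) * P1 g := by
    intro x
    funext g
    rw [crossMul_beta α x P1 g]
    calc (∑ e : Idem S, x e * betaOp α e P1 g)
        = ∑ e : Idem S, if χ e.1 then x e * P1 g else 0 := by
          refine Finset.sum_congr rfl fun e _ => ?_
          rw [hbetaP1 e]
          by_cases hc : χ e.1 <;> simp [hc]
      _ = ∑ e ∈ Finset.univ.filter (fun e : Idem S => χ e.1), x e * P1 g :=
          (Finset.sum_filter _ _).symm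
      _ = (∑ e ∈ Finset.univ.filter (fun e : Idem S => χ e.1), x e) * P1 g :=
          (Finset.sum_mul _ _ _).symm
  have hK2 : (∑ f ∈ Finset.univ.filter (fun f : Idem S => χ f.1), α m1 (P1 f))
      = α m1 1 := by
    have h := Psi_foldF α χ hα hidem m1 hχmul hm1e
      (Finset.univ : Finset (Idem S)).toList (elem (1 : B) (oneIdem S))
    rw [hP1, h]
    have hone : (oneIdem S) ∈ Finset.univ.filter (fun f : Idem S => χ f.1) := by
      refine Finset.mem_filter.mpr ⟨Finset.mem_univ _, ?_⟩
      exact hχone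
    calc (∑ f ∈ Finset.univ.filter (fun f : Idem S => χ f.1),
            α m1 (elem (1 : B) (oneIdem S) f))
        = ∑ f ∈ Finset.univ.filter (fun f : Idem S => χ f.1),
            if f = oneIdem S then α m1 1 else 0 := by
          refine Finset.sum_congr rfl fun f _ => ?_
          rw [elem, apply_ite (⇑(α m1)), map_zero]
      _ = α m1 1 := by rw [Finset.sum_ite_eq' _ (oneIdem S) (fun _ => α m1 1), if_pos hone]
  have helem : ∀ (b : B) (y : Idem S → B),
      crossMul α (elem b (oneIdem S)) y = fun g => b * y g := fun b y =>
    elem_one_mul α hα1 b y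
  -- the map σ
  set Sx : (Idem S → B) → B :=
    fun x => ∑ e ∈ Finset.univ.filter (fun e : Idem S => χ e.1), x e with hSx
  set σ : (Idem S → B) → B := fun x => α m1 (Sx x) with hσ
  have hmain : ∀ x : Idem S → B, crossMul α x P1 = crossMul α (elem (σ x) (oneIdem S)) P1 := by
    intro x
    rw [hK1 x, helem (σ x) P1]
    funext g
    show Sx x * P1 g = α m1 (Sx x) * P1 g
    rw [hcent (Sx x) (P1 g), hP1fix g]
  refine ⟨σ, ?_, ?_, ?_, ?_⟩
  · -- existence and uniqueness
    intro x _
    refine ⟨?_, hmain x, ?_⟩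
    · rw [hρ]
      exact ⟨Sx x, rfl⟩
    · rintro b ⟨b0, hb0⟩ heq
      rw [hρ] at hb0
      rw [hK1 x, helem b P1] at heq
      have heq2 : ∀ g : Idem S, Sx x * P1 g = b * P1 g := fun g => congrFun heq g
      set d : B := b - σ x with hd
      have hd0 : d = α m1 (b0 - Sx x) := by
        rw [map_sub, hb0]
      have hdP : ∀ g : Idem S, d * P1 g = 0 := by
        intro g
        rw [hd, sub_mul, ← heq2 g]
        show Sx x * P1 g - α m1 (Sx x) * P1 g = 0
        rw [hcent (Sx x) (P1 g), hP1fix g, sub_self]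
      have hfixd : α m1 d = d := by rw [hd0, hfixr]
      have hone : d = d * α m1 1 := by
        rw [hd0, ← map_mul, mul_one]
      have hzero : d * α m1 1 = 0 := by
        rw [← hK2, Finset.mul_sum]
        refine Finset.sum_eq_zero fun f _ => ?_
        calc d * α m1 (P1 f) = α m1 d * α m1 (P1 f) := by rw [hfixd]
          _ = α m1 (d * P1 f) := (map_mul _ _ _).symm
          _ = 0 := by rw [hdP f, map_zero]
      have : d = 0 := by rw [hone, hzero]
      exact (sub_eq_zero.mp this)
  · -- additive and multiplicative
    intro x y _ _
    constructor
    · show α m1 (Sx (x + y)) = α m1 (Sx x) + α m1 (Sx y)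
      rw [← map_add]
      congr 1
      rw [hSx]
      simp only [Pi.add_apply]
      exact Finset.sum_add_distrib
    · show α m1 (Sx (crossMul α x y)) = α m1 (Sx x) * α m1 (Sx y)
      have lhs1 : Sx (crossMul α x y) = ∑ p : Idem S × Idem S,
          if χ (p.1.1 * p.2.1) then x p.1 * α p.1.1 (y p.2) else 0 := by
        rw [hSx]
        show (∑ g ∈ Finset.univ.filter (fun g : Idem S => χ g.1),
          ∑ p : Idem S × Idem S,
            if p.1.1 * p.2.1 = g.1 then x p.1 * α p.1.1 (y p.2) else 0) = _
        rw [Finset.sum_comm]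
        refine Finset.sum_congr rfl fun p _ => ?_
        exact sum_filter_val_eq χ (hidem _ _ p.1.2 p.2.2) _
      have rhs1 : α m1 (Sx x) = ∑ e : Idem S, if χ e.1 then α m1 (x e) else 0 := by
        rw [hSx, map_sum, Finset.sum_filter]
      have rhs2 : α m1 (Sx y) = ∑ f : Idem S, if χ f.1 then α m1 (y f) else 0 := by
        rw [hSx, map_sum, Finset.sum_filter]
      rw [lhs1, map_sum, Fintype.sum_prod_type, rhs1, rhs2, Finset.sum_mul_sum]
      refine Finset.sum_congr rfl fun e _ => ?_
      refine Finset.sum_congr rfl fun f _ => ?_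
      rw [apply_ite (⇑(α m1)), map_zero, hχmul e.1 f.1 e.2 f.2]
      by_cases hc1 : χ e.1
      · by_cases hc2 : χ f.1
        · simp only [hc1, hc2, Bool.true_and, if_true]
          rw [map_mul, hαm1e e hc1]
        · simp only [hc1, hc2, Bool.true_and, Bool.false_eq_true, if_false, mul_zero]
      · simp only [hc1, Bool.false_and, Bool.false_eq_true, if_false, zero_mul]
  · -- scalar multiplication
    intro x _ c
    show α m1 (Sx (c • x)) = c • α m1 (Sx x)
    rw [← map_smul]
    congr 1
    rw [hSx]
    simp only [Pi.smul_apply]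
    exact (Finset.smul_sum).symm
  · -- star
    intro x _
    show α m1 (Sx (crossStar α x)) = star (α m1 (Sx x))
    rw [hSx]
    simp only [crossStar]
    rw [map_sum, map_sum, star_sum]
    refine Finset.sum_congr rfl fun f hf => ?_
    rw [hαm1e f (Finset.mem_filter.mp hf).2, map_star]
end
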